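/- If any LTL formula built from atomic propositions using ¬, ∧, □, ◇, and U (i.e., containing no 'next' operator), then it is closed under stuttering. -/
import Mathlib


def State := String → Bool

def StSeq := ℕ → State

def drop (k : ℕ) (s : StSeq) : StSeq := fun n => s (k + n)

def stutter (s : StSeq) (i : ℕ) : StSeq := fun n => if n ≤ i then s n else s (n - 1)

def CUS (F : StSeq → Prop) : Prop := ∀ (s : StSeq) (i : ℕ), F s ↔ F (stutter s i)

def Var (a : String) : StSeq → Prop := fun s => s 0 a = true

def Not' (F : StSeq → Prop) : StSeq → Prop := fun s => ¬ F s

def And' (F G : StSeq → Prop) : StSeq → Prop := fun s => F s ∧ G s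

def Or' (F G : StSeq → Prop) : StSeq → Prop := fun s => F s ∨ G s

def Imp' (F G : StSeq → Prop) : StSeq → Prop := fun s => F s → G s

def Iff' (F G : StSeq → Prop) : StSeq → Prop := fun s => F s ↔ G s

def Next (F : StSeq → Prop) : StSeq → Prop := fun s => F (drop 1 s)

def Always (F : StSeq → Prop) : StSeq → Prop := fun s => ∀ k, F (drop k s)

def Ev (F : StSeq → Prop) : StSeq → Prop := fun s => ∃ k, F (drop k s)

def Until' (F G : StSeq → Prop) : StSeq → Prop :=
  fun s => ∃ k, G (drop k s) ∧ ∀ j < k, F (drop j s)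

def Up (F : StSeq → Prop) : StSeq → Prop := And' (Not' F) (Next F)

def Down (F : StSeq → Prop) : StSeq → Prop := And' F (Next (Not' F))

def AnyEdge (F : StSeq → Prop) : StSeq → Prop := Or' (Up F) (Down F)

inductive Formula where
  | var : String → Formula
  | not : Formula → Formula
  | and : Formula → Formula → Formula
  | next : Formula → Formula
  | always : Formula → Formula
  | ev : Formula → Formula
  | until' : Formula → Formula → Formula

def interp : Formula → StSeq → Prop
  | .var a => Var a
  | .not A => Not' (interp A)
  | .and A B => And' (interp A) (interp B)
  | .next A => Next (interp A)
  | .always A => Always (interp A)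
  | .ev A => Ev (interp A)
  | .until' A B => Until' (interp A) (interp B)

def NextFree : Formula → Prop
  | .var _ => True
  | .not A => NextFree A
  | .and A B => NextFree A ∧ NextFree B
  | .next _ => False
  | .always A => NextFree A
  | .ev A => NextFree A
  | .until' A B => NextFree A ∧ NextFree B

lemma drop_stutter_le (s : StSeq) (i k : ℕ) (hk : k ≤ i) :
    drop k (stutter s i) = stutter (drop k s) (i - k) := by
  funext n
  simp only [drop, stutter]
  split_ifs with h1 h2 h2
  · rfl
  · omega
  · omega
  · have h3 : k + n - 1 = k + (n - 1) := by omega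
    rw [h3]

lemma drop_stutter_gt (s : StSeq) (i k : ℕ) (hk : i < k) :
    drop k (stutter s i) = drop (k - 1) s := by
  funext n
  simp only [drop, stutter]
  split_ifs with h1
  · omega
  · have h3 : k + n - 1 = k - 1 + n := by omega
    rw [h3]

theorem nextFree_cus (F : Formula) (h : NextFree F) : CUS (interp F) := by
  induction F with
  | var a =>
    intro s i
    simp [interp, Var, stutter]
  | not A ihA =>
    intro s i
    simp only [interp, Not']
    exact not_congr (ihA h s i)
  | and A B ihA ihB =>
    intro s i
    exact and_congr (ihA h.1 s i) (ihB h.2 s i)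
  | next A ihA => exact absurd h (by simp [NextFree])
  | always A ihA =>
    intro s i
    constructor
    · intro hs k
      rcases le_or_gt k i with hk | hk
      · rw [drop_stutter_le s i k hk]
        exact (ihA h (drop k s) (i - k)).mp (hs k)
      · rw [drop_stutter_gt s i k hk]
        exact hs (k - 1)
    · intro hs k
      rcases le_or_gt k i with hk | hk
      · have := hs k
        rw [drop_stutter_le s i k hk] at this
        exact (ihA h (drop k s) (i - k)).mpr this
      · have := hs (k + 1)
        rw [drop_stutter_gt s i (k + 1) (by omega)] at this
        simpa using this
  | ev A ihA =>
    intro s i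
    constructor
    · rintro ⟨k, hk⟩
      rcases le_or_gt k i with h' | h'
      · exact ⟨k, by rw [drop_stutter_le s i k h']; exact (ihA h (drop k s) (i - k)).mp hk⟩
      · exact ⟨k + 1, by rw [drop_stutter_gt s i (k + 1) (by omega)]; simpa using hk⟩
    · rintro ⟨k, hk⟩
      rcases le_or_gt k i with h' | h'
      · rw [drop_stutter_le s i k h'] at hk
        exact ⟨k, (ihA h (drop k s) (i - k)).mpr hk⟩
      · rw [drop_stutter_gt s i k h'] at hk
        exact ⟨k - 1, hk⟩
  | until' A B ihA ihB =>
    intro s i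
    constructor
    · rintro ⟨k, hB, hA⟩
      rcases le_or_gt k i with h' | h'
      · refine ⟨k, ?_, ?_⟩
        · rw [drop_stutter_le s i k h']
          exact (ihB h.2 (drop k s) (i - k)).mp hB
        · intro j hj
          rw [drop_stutter_le s i j (by omega)]
          exact (ihA h.1 (drop j s) (i - j)).mp (hA j hj)
      · refine ⟨k + 1, ?_, ?_⟩
        · rw [drop_stutter_gt s i (k + 1) (by omega)]
          simpa using hB
        · intro j hj
          rcases le_or_gt j i with hji | hji
          · rw [drop_stutter_le s i j hji]
            exact (ihA h.1 (drop j s) (i - j)).mp (hA j (by omega))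
          · rw [drop_stutter_gt s i j hji]
            exact hA (j - 1) (by omega)
    · rintro ⟨k, hB, hA⟩
      rcases le_or_gt k i with h' | h'
      · rw [drop_stutter_le s i k h'] at hB
        refine ⟨k, (ihB h.2 (drop k s) (i - k)).mpr hB, ?_⟩
        intro j hj
        have := hA j hj
        rw [drop_stutter_le s i j (by omega)] at this
        exact (ihA h.1 (drop j s) (i - j)).mpr this
      · rw [drop_stutter_gt s i k h'] at hB
        refine ⟨k - 1, hB, ?_⟩
        intro j hj
        rcases le_or_gt j i with hji | hji
        · have := hA j (by omega)
          rw [drop_stutter_le s i j hji] at this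
          exact (ihA h.1 (drop j s) (i - j)).mpr this
        · have := hA (j + 1) (by omega)
          rw [drop_stutter_gt s i (j + 1) (by omega)] at this
          simpa using this
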